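/- For every integer n ≥ 5, Left wins the Forbidden Leaf Variant of the Mixed Deletion Game on the complete graph K_n regardless of which player moves first. -/

import Mathlib

universe u

namespace SetTheory

/-- Pre-games, as in the older Mathlib `SetTheory.PGame` (removed from Mathlib since). -/
inductive PGame : Type (u + 1)
  | mk : ∀ α β : Type u, (α → PGame) → (β → PGame) → PGame

namespace PGame

/-- `x` is an immediate option of `y`. -/
inductive IsOption : PGame.{u} → PGame.{u} → Prop
  | moveLeft {l r : Type u} (L : l → PGame.{u}) (R : r → PGame.{u}) (i : l) :
      IsOption (L i) (mk l r L R)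
  | moveRight {l r : Type u} (L : l → PGame.{u}) (R : r → PGame.{u}) (j : r) :
      IsOption (R j) (mk l r L R)

theorem wf_isOption : WellFounded IsOption.{u} :=
  ⟨fun x => by
    induction x with
    | mk l r L R ihL ihR =>
      exact Acc.intro _ (fun y h => by
        cases h with
        | moveLeft _ _ i => exact ihL i
        | moveRight _ _ j => exact ihR j)⟩

instance : WellFoundedRelation PGame.{u} := ⟨IsOption, wf_isOption⟩

instance : Zero PGame.{u} := ⟨mk PEmpty PEmpty PEmpty.elim PEmpty.elim⟩

instance : One PGame.{u} := ⟨mk PUnit PEmpty (fun _ => 0) PEmpty.elim⟩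

/-- Negation of pre-games. -/
def neg : PGame.{u} → PGame.{u}
  | mk l r L R => mk r l (fun i => neg (R i)) (fun i => neg (L i))

instance : Neg PGame.{u} := ⟨neg⟩

/-- Sum of pre-games. -/
def add : PGame.{u} → PGame.{u} → PGame.{u}
  | mk xl xr xL xR, mk yl yr yL yR =>
    mk (xl ⊕ yl) (xr ⊕ yr)
      (Sum.elim (fun i => add (xL i) (mk yl yr yL yR)) (fun i => add (mk xl xr xL xR) (yL i)))
      (Sum.elim (fun i => add (xR i) (mk yl yr yL yR)) (fun i => add (mk xl xr xL xR) (yR i)))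
  termination_by x y => (x, y)
  decreasing_by
  · exact Prod.Lex.left _ _ (IsOption.moveLeft _ _ _)
  · exact Prod.Lex.right _ (IsOption.moveLeft _ _ _)
  · exact Prod.Lex.left _ _ (IsOption.moveRight _ _ _)
  · exact Prod.Lex.right _ (IsOption.moveRight _ _ _)

instance : Add PGame.{u} := ⟨add⟩

/-- The pair (`x ≤ y`, `x ⧏ y`), defined by simultaneous recursion:
`x ≤ y ↔ (∀ i, xL i ⧏ y) ∧ (∀ j, x ⧏ yR j)` and
`x ⧏ y ↔ (∃ i, x ≤ yL i) ∨ (∃ j, xR j ≤ y)`. -/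
noncomputable def leLF (x : PGame.{u}) : PGame.{u} → Prop × Prop :=
  PGame.rec (motive := fun _ => PGame.{u} → Prop × Prop)
    (fun _ _ _ _ ihL ihR y =>
      PGame.rec (motive := fun _ => Prop × Prop)
        (fun _ _ _ _ jhL jhR =>
          ((∀ i, (ihL i y).2) ∧ ∀ j, (jhR j).2, (∃ i, (jhL i).1) ∨ ∃ j, (ihR j y).1)) y) x

instance : LE PGame.{u} := ⟨fun x y => (leLF x y).1⟩

/-- The less or fuzzy relation `x ⧏ y`, i.e. `¬ y ≤ x`. -/
def LF (x y : PGame.{u}) : Prop := ¬y ≤ x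

infixl:50 " ⧏ " => PGame.LF

instance : LT PGame.{u} := ⟨fun x y => x ≤ y ∧ x ⧏ y⟩

/-- The game star, `* = {0 | 0}`. -/
def star : PGame.{u} := mk PUnit PUnit (fun _ => 0) fun _ => 0

/-- The nim-heap of size `o`. -/
noncomputable def nim (o : Ordinal.{u}) : PGame.{u} :=
  mk o.ToType o.ToType (fun x => nim (Ordinal.typein (α := o.ToType) (· < ·) x))
    (fun x => nim (Ordinal.typein (α := o.ToType) (· < ·) x))
  termination_by o
  decreasing_by
  · exact Ordinal.typein_lt_self x
  · exact Ordinal.typein_lt_self x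

end PGame

end SetTheory

open SetTheory PGame

namespace SetTheory

namespace PGame

def LeftMoves : PGame.{u} → Type u
  | mk l _ _ _ => l

def RightMoves : PGame.{u} → Type u
  | mk _ r _ _ => r

def moveLeft : (x : PGame.{u}) → LeftMoves x → PGame.{u}
  | mk _ _ L _ => L

def moveRight : (x : PGame.{u}) → RightMoves x → PGame.{u}
  | mk _ _ _ R => R

@[simp] theorem moveLeft_mk {xl xr : Type u} {xL : xl → PGame.{u}} {xR : xr → PGame.{u}} :
    (mk xl xr xL xR).moveLeft = xL := rfl

@[simp] theorem moveRight_mk {xl xr : Type u} {xL : xl → PGame.{u}} {xR : xr → PGame.{u}} :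
    (mk xl xr xL xR).moveRight = xR := rfl

theorem zero_def : (0 : PGame.{u}) = mk PEmpty PEmpty PEmpty.elim PEmpty.elim := rfl

noncomputable def innerR (A B : Prop) : PGame.{u} → Prop × Prop :=
  PGame.rec (motive := fun _ => Prop × Prop)
    (fun _ _ _ _ jhL jhR => (A ∧ ∀ j, (jhR j).2, (∃ i, (jhL i).1) ∨ B))

theorem innerR_mk (A B : Prop) {zl zr : Type u} {zL : zl → PGame.{u}} {zR : zr → PGame.{u}} :
    innerR A B (mk zl zr zL zR) =
      (A ∧ ∀ j, (innerR A B (zR j)).2, (∃ i, (innerR A B (zL i)).1) ∨ B) := rfl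

theorem leLF_def {xl xr : Type u} {xL : xl → PGame.{u}} {xR : xr → PGame.{u}} (y : PGame.{u}) :
    leLF (mk xl xr xL xR) y =
      innerR (∀ i, (leLF (xL i) y).2) (∃ j, (leLF (xR j) y).1) y := rfl

theorem innerR_congr {A A' B B' : Prop} (z : PGame.{u}) (hA : A ↔ A') (hB : B ↔ B') :
    innerR A B z = innerR A' B' z := by
  rw [propext hA, propext hB]

theorem leLF_zero (z : PGame.{u}) : leLF 0 z = innerR True False z := by
  rw [zero_def, leLF_def]
  exact innerR_congr z (by simp) (by simp)

theorem leLF_mk_zero {l r : Type u} {L : l → PGame.{u}} {R : r → PGame.{u}} :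
    leLF (mk l r L R) 0 = (∀ i, (leLF (L i) 0).2, ∃ j, (leLF (R j) 0).1) := by
  rw [leLF_def, zero_def, innerR_mk]
  simp

theorem innerR_key (w : PGame.{u}) :
    ((innerR True False w).2 ↔ ¬(leLF w 0).1) ∧ ((innerR True False w).1 ↔ ¬(leLF w 0).2) := by
  induction w with
  | mk l r L R ihL ihR =>
  rw [innerR_mk, leLF_mk_zero]
  simp only [true_and, or_false, not_forall, not_exists]
  exact ⟨exists_congr fun i => (ihL i).2, forall_congr' fun j => (ihR j).1⟩

theorem zero_le_lf {x : PGame.{u}} : 0 ≤ x ↔ ∀ j, 0 ⧏ x.moveRight j := by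
  cases x with
  | mk l r L R =>
  show (leLF 0 (mk l r L R)).1 ↔ ∀ j, ¬ (leLF (R j) 0).1
  rw [leLF_zero, innerR_mk]
  simp only [true_and]
  exact forall_congr' fun j => (innerR_key (R j)).1

theorem zero_lf_le {x : PGame.{u}} : 0 ⧏ x ↔ ∃ i, 0 ≤ x.moveLeft i := by
  cases x with
  | mk l r L R =>
  show ¬ (leLF (mk l r L R) 0).1 ↔ ∃ i, (leLF 0 (L i)).1
  rw [leLF_mk_zero]
  simp only [leLF_zero, not_forall]
  exact exists_congr fun i => ((innerR_key (L i)).2).symm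

theorem lt_iff_le_and_lf {x y : PGame.{u}} : x < y ↔ x ≤ y ∧ x ⧏ y := Iff.rfl

end PGame

end SetTheory

namespace MixedDeletion

/-- The degree of a vertex `v` with respect to an edge set `E`. -/
def deg (E : Finset (Sym2 ℕ)) (v : ℕ) : ℕ := (E.filter (fun e => v ∈ e)).card

/-- The graph position with vertex set `V` and edge set `E` has no isolated vertex. -/
def NoIsol (V : Finset ℕ) (E : Finset (Sym2 ℕ)) : Prop := ∀ v ∈ V, 0 < deg E v

/-- Result of Left deleting the vertex `v`: remove `v` and all incident edges. -/
def delV (V : Finset ℕ) (E : Finset (Sym2 ℕ)) (v : ℕ) : Finset ℕ × Finset (Sym2 ℕ) :=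
  (V.erase v, E.filter (fun e => v ∉ e))

/-- Left may legally delete vertex `v` under the base (Classic) rules:
`v` is a vertex and the deletion creates no isolated vertex. -/
def LeftOK (V : Finset ℕ) (E : Finset (Sym2 ℕ)) (v : ℕ) : Prop :=
  v ∈ V ∧ NoIsol (V.erase v) (E.filter (fun e => v ∉ e))

/-- Right may legally delete edge `e` under the base (Classic) rules:
`e` is an edge and the deletion creates no isolated vertex. -/
def RightOK (V : Finset ℕ) (E : Finset (Sym2 ℕ)) (e : Sym2 ℕ) : Prop :=
  e ∈ E ∧ NoIsol V (E.erase e)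

/-- The Classic Variant of the Mixed Deletion Game, as a partizan game:
Left deletes a vertex (and incident edges), Right deletes an edge,
and no move may create an isolated vertex. -/
def classicG : Finset ℕ → Finset (Sym2 ℕ) → PGame
  | V, E =>
    PGame.mk {v : ℕ // LeftOK V E v} {e : Sym2 ℕ // RightOK V E e}
      (fun x => classicG (V.erase x.val) (E.filter (fun e => x.val ∉ e)))
      (fun x => classicG V (E.erase x.val))
  termination_by V E => V.card + E.card
  decreasing_by
  · have h1 : (V.erase x.val).card < V.card := Finset.card_erase_lt_of_mem x.2.1
    have h2 : (E.filter (fun e => x.val ∉ e)).card ≤ E.card := Finset.card_filter_le _ _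
    omega
  · have h1 : (E.erase x.val).card < E.card := Finset.card_erase_lt_of_mem x.2.1
    omega

/-- The Forbidden Leaf Variant: as the Classic Variant, but Left may not
delete leaf vertices (vertices of degree one). -/
def flG : Finset ℕ → Finset (Sym2 ℕ) → PGame
  | V, E =>
    PGame.mk {v : ℕ // LeftOK V E v ∧ deg E v ≠ 1} {e : Sym2 ℕ // RightOK V E e}
      (fun x => flG (V.erase x.val) (E.filter (fun e => x.val ∉ e)))
      (fun x => flG V (E.erase x.val))
  termination_by V E => V.card + E.card
  decreasing_by
  · have h1 : (V.erase x.val).card < V.card := Finset.card_erase_lt_of_mem x.2.1.1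
    have h2 : (E.filter (fun e => x.val ∉ e)).card ≤ E.card := Finset.card_filter_le _ _
    omega
  · have h1 : (E.erase x.val).card < E.card := Finset.card_erase_lt_of_mem x.2.1
    omega

/-- The Mutual Failures Variant: as the Classic Variant, but in any graph
position a player has a legal move if and only if the opponent does; i.e. a
base-rules move is legal only if the opponent also has a base-rules move. -/
def mfG : Finset ℕ → Finset (Sym2 ℕ) → PGame
  | V, E =>
    PGame.mk {v : ℕ // LeftOK V E v ∧ ∃ e, RightOK V E e}
      {e : Sym2 ℕ // RightOK V E e ∧ ∃ v, LeftOK V E v}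
      (fun x => mfG (V.erase x.val) (E.filter (fun e => x.val ∉ e)))
      (fun x => mfG V (E.erase x.val))
  termination_by V E => V.card + E.card
  decreasing_by
  · have h1 : (V.erase x.val).card < V.card := Finset.card_erase_lt_of_mem x.2.1.1
    have h2 : (E.filter (fun e => x.val ∉ e)).card ≤ E.card := Finset.card_filter_le _ _
    omega
  · have h1 : (E.erase x.val).card < E.card := Finset.card_erase_lt_of_mem x.2.1.1
    omega

/-- Edge set of the path graph on vertices `0, 1, …, n-1`. -/
def pathE (n : ℕ) : Finset (Sym2 ℕ) := (Finset.range (n - 1)).image (fun i => s(i, i + 1))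

/-- Edge set of the cycle graph on vertices `0, 1, …, n-1`. -/
def cycleE (n : ℕ) : Finset (Sym2 ℕ) := (Finset.range n).image (fun i => s(i, (i + 1) % n))

/-- Edge set of the complete graph on vertices `0, 1, …, n-1`. -/
def completeE (n : ℕ) : Finset (Sym2 ℕ) := (Finset.range n).sym2.filter (fun e => ¬ e.IsDiag)

/-- The path position `P_n` in the Classic Variant. -/
def classicPath (n : ℕ) : PGame := classicG (Finset.range n) (pathE n)

/-- The cycle position `C_n` in the Classic Variant. -/
def classicCycle (n : ℕ) : PGame := classicG (Finset.range n) (cycleE n)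

/-- The complete graph position `K_n` in the Classic Variant. -/
def classicComplete (n : ℕ) : PGame := classicG (Finset.range n) (completeE n)

/-- The path position `P_n` in the Forbidden Leaf Variant. -/
def flPath (n : ℕ) : PGame := flG (Finset.range n) (pathE n)

/-- The cycle position `C_n` in the Forbidden Leaf Variant. -/
def flCycle (n : ℕ) : PGame := flG (Finset.range n) (cycleE n)

/-- The complete graph position `K_n` in the Forbidden Leaf Variant. -/
def flComplete (n : ℕ) : PGame := flG (Finset.range n) (completeE n)

/-- The path position `P_n` in the Mutual Failures Variant. -/
def mfPath (n : ℕ) : PGame := mfG (Finset.range n) (pathE n)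

/-- The cycle position `C_n` in the Mutual Failures Variant. -/
def mfCycle (n : ℕ) : PGame := mfG (Finset.range n) (cycleE n)

/-- The complete graph position `K_n` in the Mutual Failures Variant. -/
def mfComplete (n : ℕ) : PGame := mfG (Finset.range n) (completeE n)

/-- The partizan game equal to a natural number `n`. -/
def natPG : ℕ → PGame
  | 0 => 0
  | n + 1 => natPG n + 1

/-- The partizan game equal to an integer `z`. -/
def intPG (z : ℤ) : PGame := if 0 ≤ z then natPG z.toNat else -natPG (-z).toNat

/-- The game up, `↑ = {0 | *}`. -/
def up : PGame := PGame.mk PUnit PUnit (fun _ => 0) (fun _ => star)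

/-- The game down, `↓ = {* | 0}`. -/
def down : PGame := -up

/-- The sum of `n` copies of up. -/
def natUp : ℕ → PGame
  | 0 => 0
  | n + 1 => natUp n + up

/-- The game `z·↑`: `|z|` copies of up if `z ≥ 0`, and `|z|` copies of down otherwise. -/
def zUp (z : ℤ) : PGame := if 0 ≤ z then natUp z.toNat else -natUp (-z).toNat

/-- Two games have the same outcome: Left wins moving first in one iff in the other,
and Right wins moving first in one iff in the other. -/
def SameOutcome (A B : PGame) : Prop := (0 ⧏ A ↔ 0 ⧏ B) ∧ (A ⧏ 0 ↔ B ⧏ 0)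

/-- Far-star equivalence: `G + X + ✶` and `H + X + ✶` have the same outcome for
every game `X`, where `✶` (far star) is any nim-heap `*k` with `k ≥ 2`. -/
def FarStarEquiv (G H : PGame) : Prop :=
  ∀ (X : PGame) (k : ℕ), 2 ≤ k → SameOutcome (G + X + nim k) (H + X + nim k)

/-- `G` has atomic weight `z` if `G` is far-star equivalent to `z·↑`. -/
def AtomicWeight (G : PGame) (z : ℤ) : Prop := FarStarEquiv G (zUp z)

/-- A game is all-small if in every subposition Left has a move iff Right has a move. -/
def AllSmall : PGame → Prop
  | PGame.mk l r L R =>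
    (Nonempty l ↔ Nonempty r) ∧ (∀ i, AllSmall (L i)) ∧ (∀ j, AllSmall (R j))

/-! ### Auxiliary material for `fl_complete_left_wins` -/

/-- Edge set of the complete graph on an arbitrary vertex set. -/
def KE (V : Finset ℕ) : Finset (Sym2 ℕ) := V.sym2.filter (fun e => ¬ e.IsDiag)

lemma mem_KE {V : Finset ℕ} {a b : ℕ} : s(a,b) ∈ KE V ↔ a ∈ V ∧ b ∈ V ∧ a ≠ b := by
  simp [KE, Finset.mk_mem_sym2_iff]; tauto

lemma deg_pos {E : Finset (Sym2 ℕ)} {v : ℕ} (e : Sym2 ℕ) (he : e ∈ E) (hv : v ∈ e) :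
    0 < deg E v :=
  Finset.card_pos.2 ⟨e, Finset.mem_filter.2 ⟨he, hv⟩⟩

lemma deg_pos_iff {E : Finset (Sym2 ℕ)} {v : ℕ} : 0 < deg E v ↔ ∃ e ∈ E, v ∈ e := by
  simp [deg, Finset.card_pos, Finset.filter_nonempty_iff]

lemma deg_ne_one {E : Finset (Sym2 ℕ)} {v : ℕ} {e1 e2 : Sym2 ℕ}
    (h1 : e1 ∈ E) (h2 : e2 ∈ E) (hv1 : v ∈ e1) (hv2 : v ∈ e2) (hne : e1 ≠ e2) :
    deg E v ≠ 1 := by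
  have : 1 < deg E v := Finset.one_lt_card.2
    ⟨e1, Finset.mem_filter.2 ⟨h1, hv1⟩, e2, Finset.mem_filter.2 ⟨h2, hv2⟩, hne⟩
  omega

lemma noIsol_KE {V : Finset ℕ} (h : 1 < V.card) : NoIsol V (KE V) := by
  intro w hw
  obtain ⟨u, hu, hne⟩ := Finset.exists_mem_ne h w
  exact deg_pos s(w,u) (mem_KE.2 ⟨hw, hu, fun h' => hne h'.symm⟩) (by simp)

lemma filter_KE (V : Finset ℕ) (v : ℕ) :
    (KE V).filter (fun x => v ∉ x) = KE (V.erase v) := by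
  ext x
  induction x using Sym2.ind with
  | _ a b =>
    simp only [Finset.mem_filter, mem_KE, Finset.mem_erase, Sym2.mem_iff]
    constructor
    · rintro ⟨⟨ha, hb, hab⟩, hv⟩
      push_neg at hv
      exact ⟨⟨fun h => hv.1 h.symm, ha⟩, ⟨fun h => hv.2 h.symm, hb⟩, hab⟩
    · rintro ⟨⟨ha1, ha2⟩, ⟨hb1, hb2⟩, hab⟩
      refine ⟨⟨ha2, hb2, hab⟩, ?_⟩
      push_neg
      exact ⟨fun h => ha1 h.symm, fun h => hb1 h.symm⟩

lemma erase_filter_KE {V : Finset ℕ} {e : Sym2 ℕ} {v : ℕ} (hv : v ∈ e) :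
    ((KE V).erase e).filter (fun x => v ∉ x) = KE (V.erase v) := by
  rw [← filter_KE]
  ext x
  simp only [Finset.mem_filter, Finset.mem_erase]
  constructor
  · rintro ⟨⟨_, hx⟩, hvx⟩; exact ⟨hx, hvx⟩
  · rintro ⟨hx, hvx⟩
    exact ⟨⟨fun h => hvx (h ▸ hv), hx⟩, hvx⟩

lemma erase_filter_KE' {V : Finset ℕ} {e : Sym2 ℕ} {c : ℕ} (hc : c ∉ e) :
    ((KE V).erase e).filter (fun x => c ∉ x) = (KE (V.erase c)).erase e := by
  rw [← filter_KE]
  ext x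
  simp only [Finset.mem_filter, Finset.mem_erase]
  tauto

/-- In the triangle on `{a, u, d}` with edges `s(a,u)` and `s(a,d)` removed,
no remaining edge is incident to `a`. -/
lemma no_inc {a u d : ℕ} {V' : Finset ℕ}
    (hV' : ∀ y ∈ V', y = a ∨ y = u ∨ y = d) :
    ∀ x ∈ ((KE V').erase s(a,u)).erase s(a,d), a ∉ x := by
  intro x
  induction x using Sym2.ind with
  | _ p q =>
    intro hx ha
    rw [Finset.mem_erase, Finset.mem_erase] at hx
    obtain ⟨hxd, hxu, hxKE⟩ := hx
    obtain ⟨hp, hq, hpq⟩ := mem_KE.1 hxKE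
    rw [Sym2.mem_iff] at ha
    have hp3 := hV' p hp
    have hq3 := hV' q hq
    rcases ha with ha | ha <;> rcases hp3 with h1 | h1 | h1 <;> rcases hq3 with h2 | h2 | h2 <;>
      first
      | omega
      | exact hxu (by rw [Sym2.eq_iff]; omega)
      | exact hxd (by rw [Sym2.eq_iff]; omega)

/-- Left wins moving second on the complete graph on any vertex set of size at
least four. -/
lemma zero_le_flG_KE : ∀ (n : ℕ) (V : Finset ℕ), V.card = n → 4 ≤ n → 0 ≤ flG V (KE V) := by
  intro n
  induction n using Nat.strong_induction_on with
  | _ n IH =>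
  intro V hVc hn4
  rw [flG, zero_le_lf]
  rintro ⟨e, he⟩
  simp only [PGame.moveRight_mk]
  obtain ⟨heE, hni⟩ := he
  revert heE hni
  induction e using Sym2.ind with
  | _ a b =>
  intro heE hni
  obtain ⟨haV, hbV, hab⟩ := mem_KE.1 heE
  rcases Nat.lt_or_ge n 5 with h5 | h5
  · -- n = 4 : Left deletes a vertex c ∉ {a, b}; no move remains for either player.
    have hn : n = 4 := by omega
    -- find the two vertices c ≠ d outside {a, b}
    have hbV' : b ∈ V.erase a := Finset.mem_erase.2 ⟨fun h => hab h.symm, hbV⟩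
    have hcard2 : 1 < ((V.erase a).erase b).card := by
      rw [Finset.card_erase_of_mem hbV', Finset.card_erase_of_mem haV]; omega
    obtain ⟨c, hc, d, hd, hcd⟩ := Finset.one_lt_card.1 hcard2
    simp only [Finset.mem_erase] at hc hd
    obtain ⟨hcb, hca, hcV⟩ := hc
    obtain ⟨hdb, hda, hdV⟩ := hd
    -- V = {a, b, c, d}
    have hsub : ({a, b, c, d} : Finset ℕ) ⊆ V := by
      intro w hw
      simp only [Finset.mem_insert, Finset.mem_singleton] at hw
      rcases hw with rfl | rfl | rfl | rfl <;> assumption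
    have hcard4 : ({a, b, c, d} : Finset ℕ).card = 4 := by
      rw [Finset.card_insert_of_notMem (by simp; omega),
        Finset.card_insert_of_notMem (by simp; omega),
        Finset.card_insert_of_notMem (by simp; omega), Finset.card_singleton]
    have hVeq : V = {a, b, c, d} :=
      (Finset.eq_of_subset_of_card_le hsub (by omega)).symm
    have hmemV : ∀ w ∈ V, w = a ∨ w = b ∨ w = c ∨ w = d := by
      intro w hw
      rw [hVeq] at hw
      simpa using hw
    have hcnot : c ∉ s(a,b) := by simp [Sym2.mem_iff]; omega
    have hfilter := erase_filter_KE' (V := V) (e := s(a,b)) hcnot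
    have hV' : ∀ y ∈ V.erase c, y = a ∨ y = b ∨ y = d := by
      intro y hy
      rw [Finset.mem_erase] at hy
      rcases hmemV y hy.2 with rfl | rfl | rfl | rfl
      · left; rfl
      · right; left; rfl
      · exact absurd rfl hy.1
      · right; right; rfl
    rw [flG, zero_lf_le]
    refine ⟨⟨c, ⟨hcV, ?_⟩, ?_⟩, ?_⟩
    · -- no isolated vertex after deleting c
      rw [hfilter]
      intro w hw
      have hwV := Finset.mem_erase.1 hw
      have haec : a ∈ V.erase c := Finset.mem_erase.2 ⟨fun h => hca h.symm, haV⟩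
      have hbec : b ∈ V.erase c := Finset.mem_erase.2 ⟨fun h => hcb h.symm, hbV⟩
      have hdec : d ∈ V.erase c := Finset.mem_erase.2 ⟨fun h => hcd h.symm, hdV⟩
      rcases hV' w hw with rfl | rfl | rfl
      · exact deg_pos s(w,d)
          (Finset.mem_erase.2 ⟨by simp [Sym2.eq_iff]; omega,
            mem_KE.2 ⟨haec, hdec, hda.symm⟩⟩) (by simp)
      · exact deg_pos s(w,d)
          (Finset.mem_erase.2 ⟨by simp [Sym2.eq_iff]; omega,
            mem_KE.2 ⟨hbec, hdec, hdb.symm⟩⟩) (by simp)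
      · exact deg_pos s(a,w)
          (Finset.mem_erase.2 ⟨by simp [Sym2.eq_iff]; omega,
            mem_KE.2 ⟨haec, hdec, hda.symm⟩⟩) (by simp)
    · -- c has degree ≥ 2 (forbidden-leaf condition)
      refine deg_ne_one (e1 := s(c,a)) (e2 := s(c,d))
        (Finset.mem_erase.2 ⟨by simp [Sym2.eq_iff]; omega, mem_KE.2 ⟨hcV, haV, hca⟩⟩)
        (Finset.mem_erase.2 ⟨by simp [Sym2.eq_iff]; omega, mem_KE.2 ⟨hcV, hdV, hcd⟩⟩)
        (by simp) (by simp) (by simp [Sym2.eq_iff]; omega)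
    · -- the resulting position P₃ is ≥ 0: Right has no legal move in it
      simp only [PGame.moveLeft_mk]
      rw [hfilter, flG, zero_le_lf]
      rintro ⟨e', he'E, hni'⟩
      exfalso
      revert he'E hni'
      induction e' using Sym2.ind with
      | _ p q =>
      intro he'E hni'
      rw [Finset.mem_erase] at he'E
      obtain ⟨he'ne, he'KE⟩ := he'E
      obtain ⟨hp, hq, hpq⟩ := mem_KE.1 he'KE
      have haec : a ∈ V.erase c := Finset.mem_erase.2 ⟨fun h => hca h.symm, haV⟩
      have hbec : b ∈ V.erase c := Finset.mem_erase.2 ⟨fun h => hcb h.symm, hbV⟩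
      have hV'b : ∀ y ∈ V.erase c, y = b ∨ y = a ∨ y = d := by
        intro y hy; rcases hV' y hy with h | h | h <;> tauto
      rcases hV' p hp with h1 | h1 | h1 <;> rcases hV' q hq with h2 | h2 | h2 <;>
        first
        | omega
        | exact he'ne (by rw [Sym2.eq_iff]; omega)
        | (rw [show s(p,q) = s(a,d) from by rw [Sym2.eq_iff]; omega] at hni'
           obtain ⟨x, hx, hax⟩ := deg_pos_iff.1 (hni' a haec)
           exact no_inc hV' x hx hax)
        | (rw [show s(a,b) = s(b,a) from Sym2.eq_swap,
             show s(p,q) = s(b,d) from by rw [Sym2.eq_iff]; omega] at hni'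
           obtain ⟨x, hx, hbx⟩ := deg_pos_iff.1 (hni' b hbec)
           exact no_inc hV'b x hx hbx)
  · -- n ≥ 5 : Left deletes a, returning to the complete graph on V \ {a}.
    have hamem : a ∈ s(a,b) := by simp
    have hfilter := erase_filter_KE (V := V) hamem
    rw [flG, zero_lf_le]
    refine ⟨⟨a, ⟨haV, ?_⟩, ?_⟩, ?_⟩
    · rw [hfilter]
      exact noIsol_KE (by rw [Finset.card_erase_of_mem haV]; omega)
    · -- a has degree ≥ 2 after the edge deletion
      have hbV' : b ∈ V.erase a := Finset.mem_erase.2 ⟨fun h => hab h.symm, hbV⟩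
      have hcard2 : 1 < ((V.erase a).erase b).card := by
        rw [Finset.card_erase_of_mem hbV', Finset.card_erase_of_mem haV]; omega
      obtain ⟨u, hu, w, hw, huw⟩ := Finset.one_lt_card.1 hcard2
      simp only [Finset.mem_erase] at hu hw
      obtain ⟨hub, hua, huV⟩ := hu
      obtain ⟨hwb, hwa, hwV⟩ := hw
      refine deg_ne_one (e1 := s(a,u)) (e2 := s(a,w))
        (Finset.mem_erase.2 ⟨by simp [Sym2.eq_iff]; omega,
          mem_KE.2 ⟨haV, huV, fun h => hua h.symm⟩⟩)
        (Finset.mem_erase.2 ⟨by simp [Sym2.eq_iff]; omega,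
          mem_KE.2 ⟨haV, hwV, fun h => hwa h.symm⟩⟩)
        (by simp) (by simp) (by simp [Sym2.eq_iff]; omega)
    · simp only [PGame.moveLeft_mk]
      rw [hfilter]
      exact IH (n-1) (by omega) _ (by rw [Finset.card_erase_of_mem haV, hVc]) (by omega)

/-- For every `n ≥ 5`, Left wins the Forbidden Leaf Variant on the complete graph
`K_n` regardless of which player moves first. -/
theorem fl_complete_left_wins : ∀ n : ℕ, 5 ≤ n → 0 < flComplete n := by
  intro n hn
  have hKE : completeE n = KE (Finset.range n) := rfl
  rw [PGame.lt_iff_le_and_lf]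
  constructor
  · rw [flComplete, hKE]
    exact zero_le_flG_KE n _ (Finset.card_range n) (by omega)
  · -- Left moving first deletes vertex 0
    rw [flComplete, hKE, flG, zero_lf_le]
    have h0 : (0 : ℕ) ∈ Finset.range n := Finset.mem_range.2 (by omega)
    refine ⟨⟨0, ⟨h0, ?_⟩, ?_⟩, ?_⟩
    · rw [filter_KE]
      exact noIsol_KE (by rw [Finset.card_erase_of_mem h0, Finset.card_range]; omega)
    · refine deg_ne_one (e1 := s(0,1)) (e2 := s(0,2))
        (mem_KE.2 ⟨h0, Finset.mem_range.2 (by omega), by omega⟩)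
        (mem_KE.2 ⟨h0, Finset.mem_range.2 (by omega), by omega⟩)
        (by simp) (by simp) (by simp [Sym2.eq_iff])
    · simp only [PGame.moveLeft_mk]
      rw [filter_KE]
      exact zero_le_flG_KE (n-1) _
        (by rw [Finset.card_erase_of_mem h0, Finset.card_range]) (by omega)

end MixedDeletion
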